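/- Fact 2 (N-party quantum bound, upper bound part): Let N ≥ 2, let A_{1,0}, A_{1,1} be Hermitian matrices on ℂ^{d₁} and A_{n,0}, A_{n,1} Hermitian matrices on ℂ^{d_n} (n = 2,…,N), all with squares ⪯ identity, and let ρ be a density matrix on ℂ^{d₁} ⊗ ⋯ ⊗ ℂ^{d_N}. Then for every a ∈ {0,1}^N, Tr[B̂_a ρ] ≤ 2(N−1). -/

import Mathlib

/-! Fact 2 (N-party quantum bound, upper bound part): `Tr[B̂_a ρ] ≤ 2(N−1)`. -/

open Matrix Finset
open scoped Matrix Kronecker ComplexOrder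

noncomputable section

def PauliX : Matrix (Fin 2) (Fin 2) ℂ := !![0, 1; 1, 0]

def PauliZ : Matrix (Fin 2) (Fin 2) ℂ := !![1, 0; 0, -1]

/-- `tildeA A 0 = (A₀ - A₁)/√2` and `tildeA A 1 = (A₀ + A₁)/√2`. -/
def tildeA {n : Type*} (A : Fin 2 → Matrix n n ℂ) (j : Fin 2) : Matrix n n ℂ :=
  (Real.sqrt 2 : ℂ)⁻¹ • (A 0 + (-1 : ℂ) ^ ((j : ℕ) + 1) • A 1)

/-- Kronecker product of a family of matrices, on index `Π n, p n`. -/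
def famKron {N : ℕ} {p q : Fin N → Type*} (M : ∀ n, Matrix (p n) (q n) ℂ) :
    Matrix (∀ n, p n) (∀ n, q n) ℂ :=
  Matrix.of fun s t => ∏ n, M n (s n) (t n)

/-- The N-party Bell operator
`B̂_a = (−1)^{a₁} [ (N−1) Ã_{1,1} ⊗ A_{2,1} ⊗ ⋯ ⊗ A_{N,1}
        + Σ_{n=2}^N (−1)^{a_n} Ã_{1,0} ⊗ A_{n,0}^{(n)} ]`,
where party `n` of the paper corresponds to index `n−1 : Fin N`. -/
def NBell {N : ℕ} [NeZero N] {d : Fin N → ℕ}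
    (A : ∀ n, Fin 2 → Matrix (Fin (d n)) (Fin (d n)) ℂ) (a : Fin N → Fin 2) :
    Matrix (∀ n, Fin (d n)) (∀ n, Fin (d n)) ℂ :=
  (-1 : ℂ) ^ (a 0 : ℕ) •
    (((N : ℂ) - 1) • famKron (Function.update (fun n => A n 1) 0 (tildeA (A 0) 1)) +
      ∑ n ∈ Finset.univ.erase 0, (-1 : ℂ) ^ (a n : ℕ) •
        famKron (Function.update
          (Function.update (fun m => (1 : Matrix (Fin (d m)) (Fin (d m)) ℂ))
            0 (tildeA (A 0) 0)) n (A n 0)))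

/-- The GHZ-like state `|φ_a⟩ = (|a₁ … a_N⟩ + (−1)^{a₁} |1−a₁ … 1−a_N⟩)/√2`. -/
def ghz {N : ℕ} [NeZero N] (a : Fin N → Fin 2) : (Fin N → Fin 2) → ℂ := fun s =>
  (Real.sqrt 2 : ℂ)⁻¹ *
    ((if s = a then 1 else 0) +
      (-1 : ℂ) ^ (a 0 : ℕ) * (if s = (fun n => a n + 1) then 1 else 0))

section KronAux
variable {N : ℕ} {d : Fin N → ℕ}

lemma famKron_mul (M M' : ∀ n, Matrix (Fin (d n)) (Fin (d n)) ℂ) :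
    famKron M * famKron M' = famKron (fun n => M n * M' n) := by
  ext s t
  simp only [famKron, Matrix.mul_apply, Matrix.of_apply, ← Finset.prod_mul_distrib,
    Finset.prod_univ_sum, Fintype.piFinset_univ]

lemma famKron_conjTranspose (M : ∀ n, Matrix (Fin (d n)) (Fin (d n)) ℂ) :
    (famKron M)ᴴ = famKron (fun n => (M n)ᴴ) := by
  ext s t
  simp [famKron, conjTranspose_apply, star_prod]

lemma famKron_one : famKron (fun n => (1 : Matrix (Fin (d n)) (Fin (d n)) ℂ)) = 1 := by
  ext s t
  simp only [famKron, Matrix.of_apply, Matrix.one_apply]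
  by_cases h : s = t
  · subst h; simp
  · rw [if_neg h]
    obtain ⟨n, hn⟩ := Function.ne_iff.mp h
    exact Finset.prod_eq_zero (mem_univ n) (by simp [Matrix.one_apply, hn])

open scoped MatrixOrder in
lemma posSemidef_iff_eq_transpose_mul_self {m : Type*} [Fintype m] [DecidableEq m]
    {M : Matrix m m ℂ} : M.PosSemidef ↔ ∃ B : Matrix m m ℂ, M = Bᴴ * B :=
  ⟨fun h => CStarAlgebra.nonneg_iff_eq_star_mul_self.mp h.nonneg,
    by rintro ⟨B, rfl⟩; exact posSemidef_conjTranspose_mul_self B⟩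

lemma famKron_posSemidef {M : ∀ n, Matrix (Fin (d n)) (Fin (d n)) ℂ}
    (h : ∀ n, (M n).PosSemidef) : (famKron M).PosSemidef := by
  choose B hB using fun n => posSemidef_iff_eq_transpose_mul_self.mp (h n)
  have : famKron M = (famKron B)ᴴ * famKron B := by
    rw [famKron_conjTranspose, famKron_mul]
    exact congrArg famKron (funext hB)
  rw [this]
  exact posSemidef_conjTranspose_mul_self _

lemma famKron_comm {M M' : ∀ n, Matrix (Fin (d n)) (Fin (d n)) ℂ}
    (h : ∀ n, M n * M' n = M' n * M n) :
    famKron M * famKron M' = famKron M' * famKron M := by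
  rw [famKron_mul, famKron_mul]
  exact congrArg famKron (funext h)

lemma famKron_isHermitian {M : ∀ n, Matrix (Fin (d n)) (Fin (d n)) ℂ}
    (h : ∀ n, (M n).IsHermitian) : (famKron M).IsHermitian := by
  have : (famKron M)ᴴ = famKron (fun n => (M n)ᴴ) := by
    ext s t; simp [famKron, conjTranspose_apply, star_prod]
  rw [Matrix.IsHermitian, this]
  exact congrArg famKron (funext fun n => (h n).eq)

lemma famKron_update_apply (F : ∀ n, Matrix (Fin (d n)) (Fin (d n)) ℂ) (k : Fin N)
    (X : Matrix (Fin (d k)) (Fin (d k)) ℂ) (s t : ∀ n, Fin (d n)) :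
    famKron (Function.update F k X) s t
      = X (s k) (t k) * ∏ n ∈ univ.erase k, F n (s n) (t n) := by
  show (∏ n, (Function.update F k X n) (s n) (t n)) = _
  rw [← Finset.mul_prod_erase univ _ (mem_univ k)]
  rw [Function.update_self]
  congr 1
  exact Finset.prod_congr rfl fun n hn => by
    rw [Function.update_of_ne (Finset.ne_of_mem_erase hn)]

lemma famKron_update_add (F : ∀ n, Matrix (Fin (d n)) (Fin (d n)) ℂ) (k : Fin N)
    (B C : Matrix (Fin (d k)) (Fin (d k)) ℂ) :
    famKron (Function.update F k (B + C))
      = famKron (Function.update F k B) + famKron (Function.update F k C) := by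
  ext s t
  simp only [Matrix.add_apply, famKron_update_apply, add_mul]

lemma famKron_update_sub (F : ∀ n, Matrix (Fin (d n)) (Fin (d n)) ℂ) (k : Fin N)
    (B C : Matrix (Fin (d k)) (Fin (d k)) ℂ) :
    famKron (Function.update F k (B - C))
      = famKron (Function.update F k B) - famKron (Function.update F k C) := by
  ext s t
  simp only [Matrix.sub_apply, famKron_update_apply, sub_mul]

lemma famKron_le_one {M : ∀ n, Matrix (Fin (d n)) (Fin (d n)) ℂ}
    (h1 : ∀ n, (M n).PosSemidef)
    (h2 : ∀ n, ((1 : Matrix (Fin (d n)) (Fin (d n)) ℂ) - M n).PosSemidef) :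
    ((1 : Matrix (∀ n, Fin (d n)) (∀ n, Fin (d n)) ℂ) - famKron M).PosSemidef := by
  classical
  have ones1 : ∀ n, (fun m => (1 : Matrix (Fin (d m)) (Fin (d m)) ℂ)) n = 1 := fun _ => rfl
  have key : ∀ s : Finset (Fin N),
      ((1 : Matrix (∀ n, Fin (d n)) (∀ n, Fin (d n)) ℂ)
        - famKron (fun n => if n ∈ s then M n else 1)).PosSemidef := by
    intro s
    induction s using Finset.induction_on with
    | empty =>
        have : (fun n => if n ∈ (∅ : Finset (Fin N)) then M n else 1)
            = (fun n => (1 : Matrix (Fin (d n)) (Fin (d n)) ℂ)) := by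
          funext n; simp
        rw [this, famKron_one, sub_self]
        exact Matrix.PosSemidef.zero
    | insert k s hk ih =>
        set P := famKron (fun n => if n ∈ s then M n else 1) with hP
        set ones := (fun m => (1 : Matrix (Fin (d m)) (Fin (d m)) ℂ)) with hones
        have hsplit : famKron (fun n => if n ∈ insert k s then M n else 1)
            = famKron (Function.update ones k (M k)) * P := by
          rw [hP, famKron_mul]
          refine congrArg famKron (funext fun n => ?_)
          by_cases hn : n = k
          · subst hn
            simp [Function.update_self, hk]
          · simp [Function.update_of_ne hn, Finset.mem_insert, hn, ones1]
        -- 1 - E psd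
        have h1E : (1 : Matrix (∀ n, Fin (d n)) (∀ n, Fin (d n)) ℂ)
            - famKron (Function.update ones k (M k))
            = famKron (Function.update ones k (1 - M k)) := by
          rw [famKron_update_sub]
          congr 1
          rw [show Function.update ones k (1 : Matrix (Fin (d k)) (Fin (d k)) ℂ)
              = ones from Function.update_eq_self k ones]
          exact famKron_one.symm
        have hupd_psd : ∀ (C : Matrix (Fin (d k)) (Fin (d k)) ℂ), C.PosSemidef →
            (famKron (Function.update ones k C)).PosSemidef := by
          intro C hC
          refine famKron_posSemidef fun n => ?_
          by_cases hn : n = k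
          · subst hn; simpa using hC
          · rw [Function.update_of_ne hn]; exact Matrix.PosSemidef.one
        -- E * (1 - P) psd
        obtain ⟨C, hC⟩ := posSemidef_iff_eq_transpose_mul_self.mp (h1 k)
        set EC := famKron (Function.update ones k C) with hEC
        have hECH : ECᴴ = famKron (Function.update ones k Cᴴ) := by
          rw [hEC, famKron_conjTranspose]
          refine congrArg famKron (funext fun n => ?_)
          by_cases hn : n = k
          · subst hn; simp
          · simp [Function.update_of_ne hn, ones1]
        have hE_eq : famKron (Function.update ones k (M k)) = ECᴴ * EC := by
          rw [hECH, hEC, famKron_mul]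
          refine congrArg famKron (funext fun n => ?_)
          by_cases hn : n = k
          · subst hn; simp [hC]
          · simp [Function.update_of_ne hn, ones1]
        have hcomm : EC * P = P * EC := by
          rw [hEC, hP]
          refine famKron_comm fun n => ?_
          by_cases hn : n = k
          · subst hn; simp [if_neg hk]
          · simp [Function.update_of_ne hn, ones1]
        have hEP : famKron (Function.update ones k (M k)) * (1 - P)
            = ECᴴ * (1 - P) * EC := by
          rw [hE_eq, Matrix.mul_assoc, Matrix.mul_assoc]
          congr 1
          rw [Matrix.mul_sub, Matrix.sub_mul, Matrix.mul_one, Matrix.one_mul, hcomm]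
        have h2' : (famKron (Function.update ones k (M k)) * (1 - P)).PosSemidef := by
          rw [hEP]
          exact ih.conjTranspose_mul_mul_same EC
        have hid : (1 : Matrix (∀ n, Fin (d n)) (∀ n, Fin (d n)) ℂ)
            - famKron (Function.update ones k (M k)) * P
            = ((1 : Matrix (∀ n, Fin (d n)) (∀ n, Fin (d n)) ℂ)
                - famKron (Function.update ones k (M k)))
              + famKron (Function.update ones k (M k)) * (1 - P) := by
          rw [Matrix.mul_sub, Matrix.mul_one]
          abel
        rw [hsplit, hid]
        exact ((h1E ▸ hupd_psd _ (h2 k))).add h2'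
  have := key Finset.univ
  simpa using this
lemma sos_step {m : Type*} [Fintype m] [DecidableEq m] {S T : Matrix m m ℂ}
    (hS : S.IsHermitian) (hT : T.IsHermitian) (hc : S * T = T * S) :
    (S * S + T * T - S * T - T * S).PosSemidef := by
  have : S * S + T * T - S * T - T * S = (S - T)ᴴ * (S - T) := by
    rw [conjTranspose_sub, hS.eq, hT.eq]
    noncomm_ring
  rw [this]
  exact posSemidef_conjTranspose_mul_self _

lemma psd_trace_nonneg {m : Type*} [Fintype m] {M : Matrix m m ℂ}
    (hM : M.PosSemidef) : 0 ≤ M.trace := by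
  classical
  rw [Matrix.trace]
  refine Finset.sum_nonneg fun i _ => ?_
  have := hM.dotProduct_mulVec_nonneg (Pi.single i 1)
  simpa [dotProduct, Matrix.mulVec, Pi.single_apply, Matrix.diag] using this

lemma psd_trace_mul_nonneg {m : Type*} [Fintype m] [DecidableEq m]
    {M P : Matrix m m ℂ} (hM : M.PosSemidef) (hP : P.PosSemidef) :
    0 ≤ (M * P).trace := by
  obtain ⟨C, rfl⟩ := posSemidef_iff_eq_transpose_mul_self.mp hM
  rw [Matrix.mul_assoc, Matrix.trace_mul_comm]
  exact psd_trace_nonneg (by simpa [Matrix.mul_assoc] using hP.mul_mul_conjTranspose_same C)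

end KronAux

section TA
variable {n : Type*} [Fintype n] [DecidableEq n]

lemma tildeA_isHermitian {A : Fin 2 → Matrix n n ℂ} (h0 : (A 0).IsHermitian)
    (h1 : (A 1).IsHermitian) (j : Fin 2) : (tildeA A j).IsHermitian := by
  have hs : star ((Real.sqrt 2 : ℂ))⁻¹ = ((Real.sqrt 2 : ℂ))⁻¹ := by
    simp [star_inv₀, Complex.star_def, Complex.conj_ofReal]
  have hs2 : star ((-1 : ℂ) ^ ((j : ℕ) + 1)) = (-1 : ℂ) ^ ((j : ℕ) + 1) := by
    rw [star_pow]; norm_num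
  simp [tildeA, Matrix.IsHermitian, conjTranspose_smul, conjTranspose_add, h0.eq, h1.eq, hs, hs2]

lemma tildeA_one : ∀ (A : Fin 2 → Matrix n n ℂ),
    tildeA A 1 = (Real.sqrt 2 : ℂ)⁻¹ • (A 0 + A 1) := by
  intro A; simp [tildeA]

lemma tildeA_zero : ∀ (A : Fin 2 → Matrix n n ℂ),
    tildeA A 0 = (Real.sqrt 2 : ℂ)⁻¹ • (A 0 - A 1) := by
  intro A; simp [tildeA, sub_eq_add_neg]

lemma tildeA_sq_add (A : Fin 2 → Matrix n n ℂ) :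
    tildeA A 1 * tildeA A 1 + tildeA A 0 * tildeA A 0 = A 0 * A 0 + A 1 * A 1 := by
  have hc : ((Real.sqrt 2 : ℂ))⁻¹ * ((Real.sqrt 2 : ℂ))⁻¹ = (2 : ℂ)⁻¹ := by
    rw [← mul_inv, ← Complex.ofReal_mul, Real.mul_self_sqrt (by norm_num)]
    norm_num
  rw [tildeA_one, tildeA_zero, smul_mul_smul_comm, smul_mul_smul_comm, hc,
    add_mul, mul_add, mul_add, sub_mul, mul_sub, mul_sub]
  module

end TA

section Bell
variable {N : ℕ} [NeZero N] {d : Fin N → ℕ}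

lemma bell_term_psd (A : ∀ n, Fin 2 → Matrix (Fin (d n)) (Fin (d n)) ℂ)
    (hAh : ∀ n x, (A n x).IsHermitian)
    (hAc : ∀ n x, ((1 : Matrix (Fin (d n)) (Fin (d n)) ℂ) - A n x ^ 2).PosSemidef)
    (n : Fin N) (hn : n ≠ 0) (ε κ : ℂ) (hε : ε * ε = 1) (hκ : κ * κ = 1)
    (hsε : star ε = ε) (hsκ : star κ = κ) :
    ((1 : Matrix (∀ m, Fin (d m)) (∀ m, Fin (d m)) ℂ) + 1 + 1 + 1
      - (ε • famKron (Function.update (fun m => A m 1) 0 (tildeA (A 0) 1))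
         + ε • famKron (Function.update (fun m => A m 1) 0 (tildeA (A 0) 1))
         + κ • famKron (Function.update (Function.update
             (fun m => (1 : Matrix (Fin (d m)) (Fin (d m)) ℂ)) 0 (tildeA (A 0) 0)) n (A n 0))
         + κ • famKron (Function.update (Function.update
             (fun m => (1 : Matrix (Fin (d m)) (Fin (d m)) ℂ)) 0 (tildeA (A 0) 0)) n (A n 0)))).PosSemidef := by
  classical
  set Z := tildeA (A 0) 1 with hZdef
  set X := tildeA (A 0) 0 with hXdef
  have hZh : Z.IsHermitian := tildeA_isHermitian (hAh 0 0) (hAh 0 1) 1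
  have hXh : X.IsHermitian := tildeA_isHermitian (hAh 0 0) (hAh 0 1) 0
  set EZ := famKron (Function.update (fun m => (1 : Matrix (Fin (d m)) (Fin (d m)) ℂ)) 0 Z) with hEZdef
  set EX := famKron (Function.update (fun m => (1 : Matrix (Fin (d m)) (Fin (d m)) ℂ)) 0 X) with hEXdef
  set EZZ := famKron (Function.update (fun m => (1 : Matrix (Fin (d m)) (Fin (d m)) ℂ)) 0 (Z * Z)) with hEZZdef
  set EXX := famKron (Function.update (fun m => (1 : Matrix (Fin (d m)) (Fin (d m)) ℂ)) 0 (X * X)) with hEXXdef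
  set K := famKron (Function.update (fun m => A m 1) 0 (1 : Matrix (Fin (d 0)) (Fin (d 0)) ℂ)) with hKdef
  set G := famKron (Function.update (fun m => A m 1) 0 Z) with hGdef
  set L := famKron (Function.update (fun m => (1 : Matrix (Fin (d m)) (Fin (d m)) ℂ)) n (A n 0)) with hLdef
  set F := famKron (Function.update (Function.update
      (fun m => (1 : Matrix (Fin (d m)) (Fin (d m)) ℂ)) 0 X) n (A n 0)) with hFdef
  -- Hermitian facts
  have hEZh : EZ.IsHermitian := by
    refine famKron_isHermitian fun m => ?_
    by_cases hm : m = 0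
    · subst hm; simpa using hZh
    · rw [Function.update_of_ne hm]; exact isHermitian_one
  have hEXh : EX.IsHermitian := by
    refine famKron_isHermitian fun m => ?_
    by_cases hm : m = 0
    · subst hm; simpa using hXh
    · rw [Function.update_of_ne hm]; exact isHermitian_one
  have hKh : K.IsHermitian := by
    refine famKron_isHermitian fun m => ?_
    by_cases hm : m = 0
    · subst hm; simpa using isHermitian_one
    · rw [Function.update_of_ne hm]; exact hAh m 1
  have hLh : L.IsHermitian := by
    refine famKron_isHermitian fun m => ?_
    by_cases hm : m = n
    · subst hm; simpa using hAh m 0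
    · rw [Function.update_of_ne hm]; exact isHermitian_one
  -- multiplication facts
  have hEZK : EZ * K = G := by
    rw [hEZdef, hKdef, hGdef, famKron_mul]
    refine congrArg famKron (funext fun m => ?_)
    by_cases hm : m = 0
    · subst hm; simp
    · simp [Function.update_of_ne hm]
  have hKEZ : K * EZ = G := by
    rw [hEZdef, hKdef, hGdef, famKron_mul]
    refine congrArg famKron (funext fun m => ?_)
    by_cases hm : m = 0
    · subst hm; simp
    · simp [Function.update_of_ne hm]
  have hEZsq : EZ * EZ = EZZ := by
    rw [hEZdef, hEZZdef, famKron_mul]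
    refine congrArg famKron (funext fun m => ?_)
    by_cases hm : m = 0
    · subst hm; simp
    · simp [Function.update_of_ne hm]
  have hEXsq : EX * EX = EXX := by
    rw [hEXdef, hEXXdef, famKron_mul]
    refine congrArg famKron (funext fun m => ?_)
    by_cases hm : m = 0
    · subst hm; simp
    · simp [Function.update_of_ne hm]
  have hEXL : EX * L = F := by
    rw [hEXdef, hLdef, hFdef, famKron_mul]
    refine congrArg famKron (funext fun m => ?_)
    by_cases hm : m = n
    · subst hm
      rw [Function.update_of_ne hn, Function.update_self, Function.update_self, one_mul]
    · rw [Function.update_of_ne hm, Function.update_of_ne hm]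
      by_cases hm0 : m = 0
      · subst hm0; simp
      · simp [Function.update_of_ne hm0]
  have hLEX : L * EX = F := by
    rw [hEXdef, hLdef, hFdef, famKron_mul]
    refine congrArg famKron (funext fun m => ?_)
    by_cases hm : m = n
    · subst hm
      rw [Function.update_of_ne hn, Function.update_self, Function.update_self, mul_one]
    · rw [Function.update_of_ne hm, Function.update_of_ne hm]
      by_cases hm0 : m = 0
      · subst hm0; simp
      · simp [Function.update_of_ne hm0]
  -- SOS term 1
  have hSh : (ε • EZ).IsHermitian := by
    rw [Matrix.IsHermitian, conjTranspose_smul, hsε, hEZh.eq]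
  have s1 : (EZZ + K * K - ε • G - ε • G).PosSemidef := by
    have h := sos_step hSh hKh
    rw [smul_mul_smul_comm, hε, hEZsq, one_smul, smul_mul_assoc, hEZK,
      mul_smul_comm, hKEZ] at h
    exact h rfl
  -- SOS term 2
  have hSh' : (κ • EX).IsHermitian := by
    rw [Matrix.IsHermitian, conjTranspose_smul, hsκ, hEXh.eq]
  have s2 : (EXX + L * L - κ • F - κ • F).PosSemidef := by
    have h := sos_step hSh' hLh
    rw [smul_mul_smul_comm, hκ, hEXsq, one_smul, smul_mul_assoc, hEXL,
      mul_smul_comm, hLEX] at h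
    exact h rfl
  -- middle term
  have smallpsd : ((1 : Matrix (Fin (d 0)) (Fin (d 0)) ℂ) + 1 - (Z * Z + X * X)).PosSemidef := by
    have heq : (1 : Matrix (Fin (d 0)) (Fin (d 0)) ℂ) + 1 - (Z * Z + X * X)
        = (1 - A 0 0 ^ 2) + (1 - A 0 1 ^ 2) := by
      rw [hZdef, hXdef, tildeA_sq_add, pow_two, pow_two]; abel
    rw [heq]
    exact (hAc 0 0).add (hAc 0 1)
  have honeE : famKron (Function.update (fun m => (1 : Matrix (Fin (d m)) (Fin (d m)) ℂ)) 0
      (1 : Matrix (Fin (d 0)) (Fin (d 0)) ℂ)) = (1 : Matrix (∀ m, Fin (d m)) (∀ m, Fin (d m)) ℂ) := by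
    rw [show Function.update (fun m => (1 : Matrix (Fin (d m)) (Fin (d m)) ℂ)) 0
        (1 : Matrix (Fin (d 0)) (Fin (d 0)) ℂ)
      = (fun m => (1 : Matrix (Fin (d m)) (Fin (d m)) ℂ)) from Function.update_eq_self 0 _]
    exact famKron_one
  have s3 : ((1 : Matrix (∀ m, Fin (d m)) (∀ m, Fin (d m)) ℂ) + 1 - (EZZ + EXX)).PosSemidef := by
    have key : (1 : Matrix (∀ m, Fin (d m)) (∀ m, Fin (d m)) ℂ) + 1 - (EZZ + EXX)
        = famKron (Function.update (fun m => (1 : Matrix (Fin (d m)) (Fin (d m)) ℂ)) 0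
            ((1 + 1) - (Z * Z + X * X))) := by
      rw [famKron_update_sub, famKron_update_add, famKron_update_add, honeE,
        hEZZdef, hEXXdef]
    rw [key]
    refine famKron_posSemidef fun m => ?_
    by_cases hm : m = 0
    · subst hm
      simpa using smallpsd
    · rw [Function.update_of_ne hm]; exact Matrix.PosSemidef.one
  -- contraction terms
  have s4 : ((1 : Matrix (∀ m, Fin (d m)) (∀ m, Fin (d m)) ℂ) - K * K).PosSemidef := by
    have hKK : K * K = famKron (Function.update (fun m => A m 1 * A m 1) 0
        (1 : Matrix (Fin (d 0)) (Fin (d 0)) ℂ)) := by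
      rw [hKdef, famKron_mul]
      refine congrArg famKron (funext fun m => ?_)
      by_cases hm : m = 0
      · subst hm; simp
      · simp [Function.update_of_ne hm]
    rw [hKK]
    refine famKron_le_one (fun m => ?_) (fun m => ?_)
    · by_cases hm : m = 0
      · subst hm; simpa using Matrix.PosSemidef.one
      · rw [Function.update_of_ne hm]
        have := posSemidef_conjTranspose_mul_self (A m 1)
        rwa [(hAh m 1).eq] at this
    · by_cases hm : m = 0
      · subst hm; simpa using Matrix.PosSemidef.zero
      · rw [Function.update_of_ne hm]
        have := hAc m 1
        rwa [pow_two] at this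
  have s5 : ((1 : Matrix (∀ m, Fin (d m)) (∀ m, Fin (d m)) ℂ) - L * L).PosSemidef := by
    have hLL : L * L = famKron (Function.update
        (fun m => (1 : Matrix (Fin (d m)) (Fin (d m)) ℂ)) n (A n 0 * A n 0)) := by
      rw [hLdef, famKron_mul]
      refine congrArg famKron (funext fun m => ?_)
      by_cases hm : m = n
      · subst hm; simp
      · simp [Function.update_of_ne hm]
    rw [hLL]
    refine famKron_le_one (fun m => ?_) (fun m => ?_)
    · by_cases hm : m = n
      · subst hm
        have := posSemidef_conjTranspose_mul_self (A m 0)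
        rw [(hAh m 0).eq] at this
        simpa using this
      · rw [Function.update_of_ne hm]; exact Matrix.PosSemidef.one
    · by_cases hm : m = n
      · subst hm
        have := hAc m 0
        rw [pow_two] at this
        simpa using this
      · rw [Function.update_of_ne hm]
        simpa using Matrix.PosSemidef.zero
  -- assemble
  have total := (((s1.add s2).add s3).add s4).add s5
  have heq : (1 : Matrix (∀ m, Fin (d m)) (∀ m, Fin (d m)) ℂ) + 1 + 1 + 1
      - (ε • G + ε • G + κ • F + κ • F)
      = (EZZ + K * K - ε • G - ε • G) + (EXX + L * L - κ • F - κ • F)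
        + ((1 : Matrix (∀ m, Fin (d m)) (∀ m, Fin (d m)) ℂ) + 1 - (EZZ + EXX))
        + ((1 : Matrix (∀ m, Fin (d m)) (∀ m, Fin (d m)) ℂ) - K * K)
        + ((1 : Matrix (∀ m, Fin (d m)) (∀ m, Fin (d m)) ℂ) - L * L) := by
    abel
  rw [heq]
  exact total


lemma final_scalar {ι : Type*} (s : Finset ι) (ε : ℂ) (g c : ℂ) (e f : ι → ℂ)
    (hc : (s.card : ℂ) = c)
    (hkey : ∀ n ∈ s, (0:ℂ) ≤ 4 - (ε * g + ε * g + (ε * e n) * f n + (ε * e n) * f n)) :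
    ε * (c * g + ∑ n ∈ s, e n * f n) ≤ 2 * c := by
  have h := Finset.sum_nonneg hkey
  have hsum : ∑ n ∈ s, (4 - (ε * g + ε * g + (ε * e n) * f n + (ε * e n) * f n))
      = c * 4 - (c * (ε * g + ε * g) + (ε * (∑ n ∈ s, e n * f n) + ε * (∑ n ∈ s, e n * f n))) := by
    rw [Finset.sum_sub_distrib, Finset.sum_const, nsmul_eq_mul, hc]
    congr 1
    simp only [Finset.sum_add_distrib, Finset.sum_const, nsmul_eq_mul, hc, mul_assoc,
      ← Finset.mul_sum]
    ring
  rw [hsum] at h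
  have h2 : (0:ℂ) ≤ (2⁻¹ : ℂ) := by
    rw [show ((2⁻¹:ℂ)) = ((2⁻¹ : ℝ) : ℂ) by norm_num]
    rw [Complex.zero_le_real]
    norm_num
  have h3 := mul_nonneg h2 h
  have h4 : (2⁻¹ : ℂ) * (c * 4 - (c * (ε * g + ε * g)
      + (ε * (∑ n ∈ s, e n * f n) + ε * (∑ n ∈ s, e n * f n))))
      = 2 * c - ε * (c * g + ∑ n ∈ s, e n * f n) := by ring
  rw [h4] at h3
  exact sub_nonneg.mp h3


end Bell


theorem quantum_bound_N_party (N : ℕ) [NeZero N] (hN : 2 ≤ N) (d : Fin N → ℕ)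
    (A : ∀ n, Fin 2 → Matrix (Fin (d n)) (Fin (d n)) ℂ)
    (hAh : ∀ n x, (A n x).IsHermitian)
    (hAc : ∀ n x, ((1 : Matrix (Fin (d n)) (Fin (d n)) ℂ) - A n x ^ 2).PosSemidef)
    (ρ : Matrix (∀ n, Fin (d n)) (∀ n, Fin (d n)) ℂ)
    (hρ : ρ.PosSemidef) (hρtr : ρ.trace = 1)
    (a : Fin N → Fin 2) :
    (NBell A a * ρ).trace ≤ 2 * ((N : ℂ) - 1) := by
  classical
  have hε : ((-1 : ℂ) ^ (a 0 : ℕ)) * ((-1 : ℂ) ^ (a 0 : ℕ)) = 1 := by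
    rw [← mul_pow]; norm_num
  have hsε : star ((-1 : ℂ) ^ (a 0 : ℕ)) = (-1 : ℂ) ^ (a 0 : ℕ) := by
    rw [star_pow]; norm_num
  have hcard : (((Finset.univ.erase (0 : Fin N)).card : ℂ)) = (N : ℂ) - 1 := by
    rw [Finset.card_erase_of_mem (Finset.mem_univ _), Finset.card_univ, Fintype.card_fin]
    exact_mod_cast Nat.cast_sub (le_trans one_le_two hN)
  have key : ∀ n ∈ Finset.univ.erase (0 : Fin N), (0:ℂ) ≤ 4 -
      (((-1 : ℂ) ^ (a 0 : ℕ)) * ((famKron (Function.update (fun m => A m 1) 0 (tildeA (A 0) 1)) * ρ).trace)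
        + ((-1 : ℂ) ^ (a 0 : ℕ)) * ((famKron (Function.update (fun m => A m 1) 0 (tildeA (A 0) 1)) * ρ).trace)
        + (((-1 : ℂ) ^ (a 0 : ℕ)) * ((-1 : ℂ) ^ (a n : ℕ)))
            * ((famKron (Function.update (Function.update
                (fun m => (1 : Matrix (Fin (d m)) (Fin (d m)) ℂ)) 0 (tildeA (A 0) 0)) n (A n 0)) * ρ).trace)
        + (((-1 : ℂ) ^ (a 0 : ℕ)) * ((-1 : ℂ) ^ (a n : ℕ)))
            * ((famKron (Function.update (Function.update
                (fun m => (1 : Matrix (Fin (d m)) (Fin (d m)) ℂ)) 0 (tildeA (A 0) 0)) n (A n 0)) * ρ).trace)) := by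
    intro n hn
    have hn0 : n ≠ 0 := Finset.ne_of_mem_erase hn
    have hκ : (((-1 : ℂ) ^ (a 0 : ℕ)) * ((-1 : ℂ) ^ (a n : ℕ)))
        * (((-1 : ℂ) ^ (a 0 : ℕ)) * ((-1 : ℂ) ^ (a n : ℕ))) = 1 := by
      rw [mul_mul_mul_comm, ← mul_pow, ← mul_pow]; norm_num
    have hsκ : star (((-1 : ℂ) ^ (a 0 : ℕ)) * ((-1 : ℂ) ^ (a n : ℕ)))
        = ((-1 : ℂ) ^ (a 0 : ℕ)) * ((-1 : ℂ) ^ (a n : ℕ)) := by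
      rw [star_mul', star_pow, star_pow]; norm_num
    have hpsd := bell_term_psd A hAh hAc n hn0 ((-1 : ℂ) ^ (a 0 : ℕ))
      (((-1 : ℂ) ^ (a 0 : ℕ)) * ((-1 : ℂ) ^ (a n : ℕ))) hε hκ hsε hsκ
    have h0 := psd_trace_mul_nonneg hpsd hρ
    have e : (((1 : Matrix (∀ m, Fin (d m)) (∀ m, Fin (d m)) ℂ) + 1 + 1 + 1
      - (((-1 : ℂ) ^ (a 0 : ℕ)) • famKron (Function.update (fun m => A m 1) 0 (tildeA (A 0) 1))
         + ((-1 : ℂ) ^ (a 0 : ℕ)) • famKron (Function.update (fun m => A m 1) 0 (tildeA (A 0) 1))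
         + (((-1 : ℂ) ^ (a 0 : ℕ)) * ((-1 : ℂ) ^ (a n : ℕ))) • famKron (Function.update (Function.update
             (fun m => (1 : Matrix (Fin (d m)) (Fin (d m)) ℂ)) 0 (tildeA (A 0) 0)) n (A n 0))
         + (((-1 : ℂ) ^ (a 0 : ℕ)) * ((-1 : ℂ) ^ (a n : ℕ))) • famKron (Function.update (Function.update
             (fun m => (1 : Matrix (Fin (d m)) (Fin (d m)) ℂ)) 0 (tildeA (A 0) 0)) n (A n 0)))) * ρ).trace
      = 4 -
      (((-1 : ℂ) ^ (a 0 : ℕ)) * ((famKron (Function.update (fun m => A m 1) 0 (tildeA (A 0) 1)) * ρ).trace)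
        + ((-1 : ℂ) ^ (a 0 : ℕ)) * ((famKron (Function.update (fun m => A m 1) 0 (tildeA (A 0) 1)) * ρ).trace)
        + (((-1 : ℂ) ^ (a 0 : ℕ)) * ((-1 : ℂ) ^ (a n : ℕ)))
            * ((famKron (Function.update (Function.update
                (fun m => (1 : Matrix (Fin (d m)) (Fin (d m)) ℂ)) 0 (tildeA (A 0) 0)) n (A n 0)) * ρ).trace)
        + (((-1 : ℂ) ^ (a 0 : ℕ)) * ((-1 : ℂ) ^ (a n : ℕ)))
            * ((famKron (Function.update (Function.update
                (fun m => (1 : Matrix (Fin (d m)) (Fin (d m)) ℂ)) 0 (tildeA (A 0) 0)) n (A n 0)) * ρ).trace)) := by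
      simp only [Matrix.sub_mul, Matrix.add_mul, Matrix.smul_mul, Matrix.one_mul,
        trace_sub, trace_add, trace_smul, smul_eq_mul, hρtr]
      ring
    rwa [e] at h0
  have hNB : (NBell A a * ρ).trace = ((-1 : ℂ) ^ (a 0 : ℕ)) *
      (((N : ℂ) - 1) * ((famKron (Function.update (fun m => A m 1) 0 (tildeA (A 0) 1)) * ρ).trace)
        + ∑ n ∈ Finset.univ.erase (0 : Fin N), ((-1 : ℂ) ^ (a n : ℕ))
            * ((famKron (Function.update (Function.update
                (fun m => (1 : Matrix (Fin (d m)) (Fin (d m)) ℂ)) 0 (tildeA (A 0) 0)) n (A n 0)) * ρ).trace)) := by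
    simp only [NBell, Matrix.smul_mul, Matrix.add_mul, Matrix.sum_mul, trace_smul, trace_add,
      trace_sum, smul_eq_mul]
  rw [hNB]
  exact final_scalar (Finset.univ.erase (0 : Fin N)) ((-1 : ℂ) ^ (a 0 : ℕ)) _ ((N : ℂ) - 1)
    (fun n => ((-1 : ℂ) ^ (a n : ℕ))) _ hcard key


end
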